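/- Let (X, dist) be a metric space and (μ_t)_{t>0} a family of Borel probability measures on X satisfying the large deviation lower bound with rate function I : X → [0,∞]. Let Φ : X → ℝ be bounded and continuous and let G ⊆ X be open. Then liminf_{t→0⁺} t · log ∫_G exp(−Φ(x)/t) dμ_t(x) ≥ −inf_{x ∈ G} (Φ(x) + I(x)). -/

import Mathlib

open MeasureTheory Filter
open scoped ENNReal NNReal

private lemma ereal_coe_mul_add (t a : ℝ) (ht : 0 < t) (b : EReal) :
    (t : EReal) * ((a : EReal) + b) = ((t * a : ℝ) : EReal) + (t : EReal) * b := by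
  induction b with
  | bot =>
      rw [EReal.add_bot, EReal.coe_mul_bot_of_pos ht, EReal.add_bot]
  | coe b =>
      norm_cast
      ring
  | top =>
      rw [EReal.coe_add_top, EReal.coe_mul_top_of_pos ht, EReal.coe_add_top]

/-- Varadhan lower bound: if `(μ_t)` satisfies the large deviation lower bound with rate
function `I`, `Φ` is bounded continuous and `G` is open, then
`liminf_{t→0⁺} t log ∫_G exp(−Φ/t) dμ_t ≥ −inf_G (Φ + I)`. -/
theorem varadhan_lower_bound {X : Type*} [MetricSpace X] [MeasurableSpace X] [BorelSpace X]
    (μ : ℝ → Measure X) (hprob : ∀ t > (0:ℝ), IsProbabilityMeasure (μ t))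
    (I : X → ℝ≥0∞)
    (hlower : ∀ G : Set X, IsOpen G →
      -(⨅ x ∈ G, (I x : EReal)) ≤
        Filter.liminf (fun t : ℝ => (t : EReal) * ENNReal.log (μ t G))
          (nhdsWithin 0 (Set.Ioi 0)))
    (Φ : X → ℝ) (hΦcont : Continuous Φ) (hΦbdd : ∃ M : ℝ, ∀ x, |Φ x| ≤ M)
    (G : Set X) (hG : IsOpen G) :
    -(⨅ x ∈ G, ((Φ x : EReal) + (I x : EReal))) ≤
      Filter.liminf (fun t : ℝ =>
        (t : EReal) * ENNReal.log (∫⁻ x in G, ENNReal.ofReal (Real.exp (-Φ x / t)) ∂ (μ t)))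
        (nhdsWithin 0 (Set.Ioi 0)) := by
  set L := Filter.liminf (fun t : ℝ =>
      (t : EReal) * ENNReal.log (∫⁻ x in G, ENNReal.ofReal (Real.exp (-Φ x / t)) ∂ (μ t)))
      (nhdsWithin 0 (Set.Ioi 0)) with hL
  rw [EReal.neg_le]
  refine le_iInf₂ fun x₀ hx₀ => ?_
  rw [← EReal.neg_le]
  -- case `I x₀ = ⊤` is trivial
  rcases eq_or_ne (I x₀) ⊤ with hI | hI
  · simp [hI, EReal.coe_add_top]
  obtain ⟨r, hr⟩ : ∃ r : ℝ≥0, I x₀ = r := ⟨(I x₀).toNNReal, (ENNReal.coe_toNNReal hI).symm⟩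
  have hIval : (I x₀ : EReal) = ((r : ℝ) : EReal) := by
    rw [hr, EReal.coe_nnreal_eq_coe_real]
  rw [hIval, ← EReal.coe_add, ← EReal.coe_neg]
  rw [← EReal.ge_of_forall_gt_iff_ge]
  intro z hz
  rw [EReal.coe_lt_coe_iff] at hz
  set ε : ℝ := -(Φ x₀ + r) - z with hε
  have hεpos : 0 < ε := by simp only [hε]; linarith
  set U : Set X := G ∩ Φ ⁻¹' (Set.Iio (Φ x₀ + ε)) with hUdef
  have hU : IsOpen U := hG.inter (isOpen_Iio.preimage hΦcont)
  have hx₀U : x₀ ∈ U := ⟨hx₀, by simp only [Set.mem_preimage, Set.mem_Iio]; linarith⟩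
  -- pointwise (eventual) comparison of the two liminfs
  have hev : ∀ᶠ t : ℝ in nhdsWithin (0:ℝ) (Set.Ioi 0),
      ((-(Φ x₀ + ε) : ℝ) : EReal) + (t : EReal) * ENNReal.log (μ t U) ≤
      (t : EReal) * ENNReal.log (∫⁻ x in G, ENNReal.ofReal (Real.exp (-Φ x / t)) ∂ (μ t)) := by
    filter_upwards [self_mem_nhdsWithin] with t ht
    have htpos : (0:ℝ) < t := ht
    set c : ℝ≥0∞ := ENNReal.ofReal (Real.exp (-(Φ x₀ + ε) / t)) with hc
    have hmeas : Measurable fun x => ENNReal.ofReal (Real.exp (-Φ x / t)) :=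
      ENNReal.measurable_ofReal.comp
        (Real.continuous_exp.comp ((hΦcont.neg).div_const t)).measurable
    have key : c * μ t U ≤ ∫⁻ x in G, ENNReal.ofReal (Real.exp (-Φ x / t)) ∂ (μ t) := by
      calc c * μ t U = ∫⁻ _ in U, c ∂ (μ t) := (setLIntegral_const U c).symm
        _ ≤ ∫⁻ x in U, ENNReal.ofReal (Real.exp (-Φ x / t)) ∂ (μ t) := by
            refine setLIntegral_mono hmeas fun x hx => ?_
            refine ENNReal.ofReal_le_ofReal (Real.exp_le_exp.2 ?_)
            have hxlt : Φ x < Φ x₀ + ε := hx.2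
            have : -(Φ x₀ + ε) ≤ -Φ x := by linarith
            exact div_le_div_of_nonneg_right this htpos.le |>.trans_eq rfl
        _ ≤ ∫⁻ x in G, ENNReal.ofReal (Real.exp (-Φ x / t)) ∂ (μ t) :=
            lintegral_mono_set Set.inter_subset_left
    have hlogc : ENNReal.log c = ((-(Φ x₀ + ε) / t : ℝ) : EReal) := by
      rw [hc, ENNReal.log_ofReal_of_pos (Real.exp_pos _), Real.log_exp]
    calc ((-(Φ x₀ + ε) : ℝ) : EReal) + (t : EReal) * ENNReal.log (μ t U)
        = (t : EReal) * ENNReal.log (c * μ t U) := by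
          rw [ENNReal.log_mul_add, hlogc, ereal_coe_mul_add t _ htpos,
            mul_div_cancel₀ _ htpos.ne']
      _ ≤ (t : EReal) * ENNReal.log (∫⁻ x in G, ENNReal.ofReal (Real.exp (-Φ x / t)) ∂ (μ t)) :=
          mul_le_mul_of_nonneg_left (ENNReal.log_monotone key)
            (by exact_mod_cast htpos.le)
  -- assemble
  calc (z : EReal) = ((-(Φ x₀ + ε) : ℝ) : EReal) + ((-(r : ℝ) : ℝ) : EReal) := by
        norm_cast; simp only [hε]; ring
    _ ≤ ((-(Φ x₀ + ε) : ℝ) : EReal) + -(⨅ x ∈ U, (I x : EReal)) := by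
        refine add_le_add_right ?_ _
        rw [EReal.coe_neg, ← hIval]
        exact EReal.neg_le_neg_iff.mpr (iInf₂_le x₀ hx₀U)
    _ ≤ ((-(Φ x₀ + ε) : ℝ) : EReal) +
        Filter.liminf (fun t : ℝ => (t : EReal) * ENNReal.log (μ t U))
          (nhdsWithin 0 (Set.Ioi 0)) := add_le_add_right (hlower U hU) _
    _ = Filter.liminf (fun _ : ℝ => ((-(Φ x₀ + ε) : ℝ) : EReal)) (nhdsWithin 0 (Set.Ioi 0)) +
        Filter.liminf (fun t : ℝ => (t : EReal) * ENNReal.log (μ t U))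
          (nhdsWithin 0 (Set.Ioi 0)) := by rw [liminf_const]
    _ ≤ Filter.liminf (fun t : ℝ =>
          ((-(Φ x₀ + ε) : ℝ) : EReal) + (t : EReal) * ENNReal.log (μ t U))
          (nhdsWithin 0 (Set.Ioi 0)) := EReal.le_liminf_add
    _ ≤ L := liminf_le_liminf hev
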